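/- Let F be a free group, let r be a positive integer, and let D be a subset of the sphere S_r(e) with |D| = 3. Then D is a distinct difference configuration. -/

import Mathlib

/-- A subset `D` of a group is a distinct difference configuration. -/
def IsDDC {G : Type*} [Group G] (D : Set G) : Prop :=
  ∀ g ∈ D, ∀ h ∈ D, ∀ g' ∈ D, ∀ h' ∈ D,
    g ≠ h → g' ≠ h' → g⁻¹ * h = g'⁻¹ * h' → g = g' ∧ h = h'

namespace DDCaux

open FreeGroup

variable {α : Type*} [DecidableEq α]

/-- The "cancelling pair" relation on letters. -/
def Canc (a b : α × Bool) : Prop := a.1 = b.1 ∧ a.2 = !b.2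

instance : DecidablePred (Function.uncurry (Canc (α := α))) := by
  intro p; unfold Function.uncurry Canc; infer_instance

lemma chain'_of_reduce : ∀ {L : List (α × Bool)}, reduce L = L →
    List.Chain' (fun a b => ¬ Canc a b) L := by
  intro L
  induction L with
  | nil => intro _; exact List.isChain_nil
  | cons x L ih =>
    intro hL
    rw [reduce.cons] at hL
    cases hrL : reduce L with
    | nil =>
      rw [hrL] at hL
      simp only at hL
      have : L = [] := by
        have := congrArg List.length hL; simpa using this.symm
      subst this
      exact List.isChain_singleton _
    | cons hd tl =>
      rw [hrL] at hL
      simp only at hL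
      split_ifs at hL with hc
      · exfalso
        have h1 : (hd :: tl).length ≤ L.length := by
          rw [← hrL]; exact Red.length_le reduce.red
        have h2 : tl.length = L.length + 1 := by
          have := congrArg List.length hL; simpa using this
        simp only [List.length_cons] at h1
        omega
      · have hLe : L = hd :: tl := by
          injection hL with _ h; exact h.symm
        have hred : reduce L = L := by rw [hrL, hLe]
        have hch := ih hred
        rw [hLe] at hch ⊢
        exact List.isChain_cons_cons.mpr ⟨hc, hch⟩

lemma reduce_of_chain' : ∀ {L : List (α × Bool)},
    List.Chain' (fun a b => ¬ Canc a b) L → reduce L = L := by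
  intro L
  induction L with
  | nil => intro _; rfl
  | cons x L ih =>
    intro h
    have htail : reduce L = L := ih h.tail
    rw [reduce.cons, htail]
    cases L with
    | nil => rfl
    | cons hd tl =>
      exact if_neg (List.isChain_cons_cons.mp h).1

lemma invRev_cons (x : α × Bool) (L : List (α × Bool)) :
    invRev (x :: L) = invRev L ++ [(x.1, !x.2)] := by
  simp [invRev]

lemma key : ∀ (L1 L2 : List (α × Bool)),
    reduce L1 = L1 → reduce L2 = L2 → L1.length = L2.length →
    ∃ P S1 S2, L1 = P ++ S1 ∧ L2 = P ++ S2 ∧ S1.length = S2.length ∧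
      reduce (invRev L1 ++ L2) = invRev S1 ++ S2 := by
  intro L1
  induction L1 with
  | nil =>
    intro L2 _ _ hlen
    have : L2 = [] := List.length_eq_zero_iff.mp hlen.symm
    subst this
    exact ⟨[], [], [], rfl, rfl, rfl, by simp [invRev]⟩
  | cons x L1 ih =>
    intro L2 h1 h2 hlen
    cases L2 with
    | nil => simp at hlen
    | cons y L2 =>
      by_cases hxy : x = y
      · subst hxy
        have h1' : reduce L1 = L1 := reduce_of_chain' (chain'_of_reduce h1).tail
        have h2' : reduce L2 = L2 := reduce_of_chain' (chain'_of_reduce h2).tail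
        obtain ⟨P, S1, S2, e1, e2, hl, hred⟩ := ih L2 h1' h2' (by simpa using hlen)
        refine ⟨x :: P, S1, S2, by simp [e1], by simp [e2], hl, ?_⟩
        have hstep : Red.Step (invRev (x :: L1) ++ (x :: L2)) (invRev L1 ++ L2) := by
          have hx : invRev (x :: L1) ++ (x :: L2)
              = invRev L1 ++ ((x.1, !x.2) :: (x.1, x.2) :: L2) := by
            rw [invRev_cons, List.append_assoc]; simp
          rw [hx]
          exact Red.Step.not_rev
        rw [reduce.Step.eq hstep, hred]
      · refine ⟨[], x :: L1, y :: L2, rfl, rfl, by simpa using hlen, ?_⟩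
        apply reduce_of_chain'
        have hc1 : List.Chain' (fun a b => ¬ Canc a b) (invRev (x :: L1)) := by
          apply chain'_of_reduce
          rw [reduce_invRev, h1]
        have hc2 : List.Chain' (fun a b => ¬ Canc a b) (y :: L2) :=
          chain'_of_reduce h2
        apply List.IsChain.append hc1 hc2
        intro a ha b hb
        rw [invRev_cons, List.getLast?_concat] at ha
        simp only [Option.mem_def, Option.some.injEq] at ha
        simp only [List.head?_cons, Option.mem_def, Option.some.injEq] at hb
        subst ha hb
        rintro ⟨hfst, hsnd⟩
        apply hxy
        simp only at hfst hsnd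
        have : x.2 = y.2 := by
          cases hx2 : x.2 <;> cases hy2 : y.2 <;> simp_all
        exact Prod.ext hfst this

lemma toWord_inv_mul (x y : FreeGroup α) :
    (x⁻¹ * y).toWord = reduce (invRev x.toWord ++ y.toWord) := by
  conv_lhs => rw [← mk_toWord (x := x), ← mk_toWord (x := y)]
  rw [inv_mk, mul_mk, toWord_mk]

lemma no3 {a b c : FreeGroup α} (hab : a.norm = b.norm) (hbc : b.norm = c.norm)
    (hne : a ≠ b) (he : a⁻¹ * b = b⁻¹ * c) : False := by
  obtain ⟨P, S1, S2, e1, e2, hl, hred⟩ :=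
    key a.toWord b.toWord (reduce_toWord a) (reduce_toWord b) hab
  obtain ⟨Q, T1, T2, f1, f2, hl', hred'⟩ :=
    key b.toWord c.toWord (reduce_toWord b) (reduce_toWord c) hbc
  have heq : invRev S1 ++ S2 = invRev T1 ++ T2 := by
    rw [← hred, ← hred', ← toWord_inv_mul, ← toWord_inv_mul, he]
  have hlen1 : S1.length = T1.length := by
    have := congrArg List.length heq
    simp only [List.length_append, invRev_length] at this
    omega
  obtain ⟨hA, hB⟩ := List.append_inj heq (by simp [invRev_length, hlen1])
  have hS1T1 : S1 = T1 := invRev_injective hA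
  have hPQ : P ++ S2 = Q ++ T1 := by rw [← e2, ← f1]
  have hlenP : P.length = Q.length := by
    have h1 := congrArg List.length hPQ
    simp only [List.length_append] at h1
    omega
  obtain ⟨hP, hS2T1⟩ := List.append_inj hPQ hlenP
  have : a.toWord = b.toWord := by
    rw [e1, e2, hS1T1, ← hS2T1]
  exact hne (toWord_injective this)

end DDCaux

theorem stmt9 (α : Type*) [DecidableEq α] (r : ℕ) (hr : 0 < r)
    (D : Set (FreeGroup α)) (hD : D ⊆ {g : FreeGroup α | g.norm = r})
    (hcard : D.ncard = 3) : IsDDC D := by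
  intro g hg h hh g' hg' h' hh' hgh hg'h' heq
  have ng : g.norm = r := hD hg
  have nh : h.norm = r := hD hh
  have ng' : g'.norm = r := hD hg'
  have nh' : h'.norm = r := hD hh'
  by_cases hgg' : g = g'
  · subst hgg'
    exact ⟨rfl, mul_left_cancel heq⟩
  exfalso
  by_cases hhh' : h = h'
  · subst hhh'
    exact hgg' (inv_injective (mul_right_cancel heq))
  by_cases hg'h : g' = h
  · subst hg'h
    exact DDCaux.no3 (ng.trans ng'.symm) (ng'.trans nh'.symm) hgh heq
  by_cases hh'g : h' = g
  · subst hh'g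
    exact DDCaux.no3 (ng'.trans nh'.symm) (nh'.trans nh.symm) (Ne.symm hgg') heq.symm
  -- now g, h, g', h' are four distinct elements of D, contradicting ncard D = 3
  have hfin : D.Finite := by
    by_contra hf
    rw [Set.Infinite.ncard hf] at hcard
    omega
  have hsub : ({g, h, g', h'} : Set (FreeGroup α)) ⊆ D := by
    intro z hz
    simp only [Set.mem_insert_iff, Set.mem_singleton_iff] at hz
    rcases hz with rfl | rfl | rfl | rfl <;> assumption
  have h4 : ({g, h, g', h'} : Set (FreeGroup α)).ncard = 4 := by
    rw [Set.ncard_insert_of_notMem (by simp [hgh, hgg', Ne.symm hh'g]),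
      Set.ncard_insert_of_notMem (by simp [Ne.symm hg'h, hhh']),
      Set.ncard_pair (hg'h')]
  have hle := Set.ncard_le_ncard hsub hfin
  rw [h4, hcard] at hle
  omega
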